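/- arXiv:0812.0283 — 5 statements merged into one kernel-verified Lean document; each statement's English description precedes it below -/
import Mathlib

section
/- Let h ∈ ℕ and let α, γ ∈ Bool. The number of fixed points x of the h-amplifier with x(a_0) = α and x(c_0) = γ equals 1 if α = γ, and equals 2^{h+1} if α ≠ γ. -/
/-- The local transition functions of the `h`-amplifier.  The vertex set is
`Fin 3 × Fin (h+1)`, where `(0, r)` is `a_r`, `(1, r)` is `b_r` and `(2, r)` is `c_r`. -/
def ampF (h : ℕ) (v : Fin 3 × Fin (h + 1)) (x : Fin 3 × Fin (h + 1) → Bool) : Bool :=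
  if v.1 = 1 then
    (x (1, v.2) || x (0, v.2)) && (x (1, v.2) || x (2, v.2)) && (x (0, v.2) || x (2, v.2))
  else if hr : (v.2 : ℕ) = 0 then x v
  else x (v.1, ⟨(v.2 : ℕ) - 1, by have := v.2.isLt; omega⟩)

lemma fix_line (h : ℕ) (i : Fin 3) (hi : ¬ i = 1) (x : Fin 3 × Fin (h + 1) → Bool)
    (hx : ∀ v, ampF h v x = x v) : ∀ r : Fin (h + 1), x (i, r) = x (i, 0) := by
  intro ⟨r, hr⟩
  induction r with
  | zero => rw [Fin.mk_zero]
  | succ r ih =>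
    have := hx (i, ⟨r + 1, hr⟩)
    rw [ampF] at this
    simp only [hi, if_false] at this
    rw [dif_neg (by simp)] at this
    simp only [Nat.add_sub_cancel] at this
    rw [← this, ih (by omega)]

lemma fix_b (h : ℕ) (x : Fin 3 × Fin (h + 1) → Bool) (hx : ∀ v, ampF h v x = x v)
    (r : Fin (h + 1)) :
    ((x (1, r) || x (0, r)) && (x (1, r) || x (2, r)) && (x (0, r) || x (2, r))) = x (1, r) := by
  have := hx (1, r)
  rwa [ampF, if_pos rfl] at this

/-- The number of fixed points `x` of the `h`-amplifier with `x a_0 = α` and `x c_0 = γ`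
is `1` if `α = γ` and `2 ^ (h + 1)` otherwise. -/
theorem stmt2 (h : ℕ) (α γ : Bool) :
    Fintype.card {x : Fin 3 × Fin (h + 1) → Bool //
        (∀ v, ampF h v x = x v) ∧ x (0, 0) = α ∧ x (2, 0) = γ} =
      if α = γ then 1 else 2 ^ (h + 1) := by
  by_cases hαγ : α = γ
  · subst hαγ
    rw [if_pos rfl, Fintype.card_eq_one_iff]
    refine ⟨⟨fun _ => α, fun v => ?_, rfl, rfl⟩, ?_⟩
    · rw [ampF]
      split
      · cases α <;> rfl
      · split <;> rfl
    · rintro ⟨y, hy, ha, hc⟩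
      ext ⟨i, r⟩
      have h0 : ∀ s, y (0, s) = α := fun s => by rw [fix_line h 0 (by decide) y hy s, ha]
      have h2 : ∀ s, y (2, s) = α := fun s => by rw [fix_line h 2 (by decide) y hy s, hc]
      have hb := fix_b h y hy r
      rw [h0 r, h2 r] at hb
      fin_cases i
      · exact h0 r
      · show y (1, r) = α
        rw [← hb]; cases α <;> cases y (1, r) <;> rfl
      · exact h2 r
  · rw [if_neg hαγ]
    have e : {x : Fin 3 × Fin (h + 1) → Bool //
        (∀ v, ampF h v x = x v) ∧ x (0, 0) = α ∧ x (2, 0) = γ} ≃ (Fin (h + 1) → Bool) :=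
      { toFun := fun x r => x.1 (1, r)
        invFun := fun b => ⟨fun v => if v.1 = 0 then α else if v.1 = 1 then b v.2 else γ, by
          refine ⟨?_, rfl, rfl⟩
          rintro ⟨i, r⟩
          rw [ampF]
          by_cases h1 : i = 1
          · subst h1
            rw [if_pos rfl]
            simp only
            revert hαγ; cases α <;> cases γ <;> cases b r <;> decide
          · rw [if_neg h1]
            by_cases h2 : ((⟨i, r⟩ : Fin 3 × Fin (h + 1)).2 : ℕ) = 0
            · rw [dif_pos h2]
            · rw [dif_neg h2]
              simp only [h1, if_false]⟩
        left_inv := by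
          rintro ⟨y, hy, ha, hc⟩
          ext ⟨i, r⟩
          have h0 : ∀ s, y (0, s) = α := fun s => by rw [fix_line h 0 (by decide) y hy s, ha]
          have h2 : ∀ s, y (2, s) = γ := fun s => by rw [fix_line h 2 (by decide) y hy s, hc]
          fin_cases i
          · show (if (0 : Fin 3) = 0 then α else if (0 : Fin 3) = 1 then y (1, r) else γ) = y (0, r)
            simpa using (h0 r).symm
          · show (if (1 : Fin 3) = 0 then α else if (1 : Fin 3) = 1 then y (1, r) else γ) = y (1, r)
            simp
          · show (if (2 : Fin 3) = 0 then α else if (2 : Fin 3) = 1 then y (1, r) else γ) = y (2, r)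
            simpa using (h2 r).symm
        right_inv := fun b => by funext r; simp }
    rw [Fintype.card_congr e, Fintype.card_fun]
    simp
end

section
/- Let G be a finite simple graph on vertex set U. The number of pairs (x, b), where x : U → Bool and b ∈ Bool are such that for every edge {i, j} of G one has (b ∨ x(i)) ∧ (b ∨ x(j)) ∧ (x(i) ∨ x(j)) = b, equals 2 times the number of vertex covers of G. -/
/-- For a finite simple graph `G` on vertex set `U`, the number of pairs `(x, b)` with
`x : U → Bool`, `b : Bool` such that for every edge `{i, j}` of `G` the majority
`(b ∨ x i) ∧ (b ∨ x j) ∧ (x i ∨ x j)` equals `b`, is twice the number of vertex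
covers of `G`. -/
theorem stmt12 {U : Type*} [Fintype U] [DecidableEq U]
    (G : SimpleGraph U) [DecidableRel G.Adj] :
    Fintype.card {p : (U → Bool) × Bool //
        ∀ i j, G.Adj i j → ((p.2 || p.1 i) && (p.2 || p.1 j) && (p.1 i || p.1 j)) = p.2} =
    2 * Fintype.card {C : Finset U // ∀ i j, G.Adj i j → i ∈ C ∨ j ∈ C} := by
  have e : {p : (U → Bool) × Bool //
      ∀ i j, G.Adj i j → ((p.2 || p.1 i) && (p.2 || p.1 j) && (p.1 i || p.1 j)) = p.2} ≃
      Bool × {C : Finset U // ∀ i j, G.Adj i j → i ∈ C ∨ j ∈ C} :=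
  { toFun := fun p => (p.1.2, ⟨Finset.univ.filter (fun i => p.1.1 i = p.1.2), by
      intro i j hij
      have h := p.2 i j hij
      simp only [Finset.mem_filter, Finset.mem_univ, true_and]
      revert h
      cases hb : p.1.2 <;> cases hi : p.1.1 i <;> cases hj : p.1.1 j <;> simp⟩)
    invFun := fun q => ⟨(fun i => if i ∈ q.2.1 then q.1 else !q.1, q.1), by
      intro i j hij
      rcases q.2.2 i j hij with h | h <;>
        cases hb : q.1 <;> by_cases hi : i ∈ q.2.1 <;> by_cases hj : j ∈ q.2.1 <;>
        simp_all⟩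
    left_inv := fun p => by
      apply Subtype.ext
      apply Prod.ext
      · funext i
        simp only [Finset.mem_filter, Finset.mem_univ, true_and]
        cases hb : p.1.2 <;> cases hi : p.1.1 i <;> simp
      · rfl
    right_inv := fun q => by
      apply Prod.ext
      · rfl
      · apply Subtype.ext
        ext i
        simp only [Finset.mem_filter, Finset.mem_univ, true_and]
        cases hb : q.1 <;> by_cases hi : i ∈ q.2.1 <;> simp_all }
  rw [Fintype.card_congr e, Fintype.card_prod, Fintype.card_bool]
end

section
/- Let n, m ∈ ℕ and let (p_k, q_k) ∈ {1,…,n}² for k = 1,…,m. Consider the boolean dynamical system on the vertex set {1,…,n, n+1} with f_i(x) = x(i) for 1 ≤ i ≤ n and f_{n+1}(x) = x(n+1) ∧ ⋀_{k=1}^m (x(p_k) ∨ x(q_k)). The number of fixed points of this system equals #sat + 2^n, where #sat is the number of assignments y : {1,…,n} → Bool with y(p_k) ∨ y(q_k) = true for all k. -/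
/-- The boolean dynamical system of the `S₁₀`-reduction: vertices `Sum.inl i` (`i : Fin n`)
carry the identity, and the extra vertex `Sum.inr ()` carries
`f(x) = x(n+1) ∧ ⋀_{k=1}^m (x p_k ∨ x q_k)`. -/
noncomputable def sys14 (n m : ℕ) (p q : Fin m → Fin n) (v : Fin n ⊕ Unit)
    (x : Fin n ⊕ Unit → Bool) : Bool :=
  match v with
  | Sum.inl i => x (Sum.inl i)
  | Sum.inr _ => x (Sum.inr ()) &&
      Finset.univ.inf fun k : Fin m => x (Sum.inl (p k)) || x (Sum.inl (q k))

lemma inf_true_iff {m : ℕ} (g : Fin m → Bool) :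
    (Finset.univ.inf g = true) ↔ ∀ k, g k = true := by
  rw [show (true : Bool) = ⊤ from rfl, Finset.inf_eq_top_iff]
  simp

/-- The number of fixed points of the system `sys14` equals `#sat + 2 ^ n`, where `#sat`
is the number of satisfying assignments of the positive 2-CNF `⋀_k (x_{p_k} ∨ x_{q_k})`. -/
theorem stmt14 (n m : ℕ) (p q : Fin m → Fin n) :
    Fintype.card {x : Fin n ⊕ Unit → Bool // ∀ v, sys14 n m p q v x = x v} =
    Fintype.card {y : Fin n → Bool // ∀ k, (y (p k) || y (q k)) = true} + 2 ^ n := by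
  classical
  have key : ∀ x : Fin n ⊕ Unit → Bool,
      (∀ v, sys14 n m p q v x = x v) ↔
      (x (Sum.inr ()) = true → ∀ k, (x (Sum.inl (p k)) || x (Sum.inl (q k))) = true) := by
    intro x
    constructor
    · intro h ht k
      have h2 := h (Sum.inr ())
      simp only [sys14, ht, Bool.true_and] at h2
      exact (inf_true_iff _).1 h2 k
    · intro h v
      cases v with
      | inl i => rfl
      | inr u =>
        cases u
        simp only [sys14]
        cases hx : x (Sum.inr ()) with
        | false => simp
        | true =>
          simp only [Bool.true_and]
          exact (inf_true_iff _).2 (h hx)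
  let e : {x : Fin n ⊕ Unit → Bool // ∀ v, sys14 n m p q v x = x v} ≃
      {y : Fin n → Bool // ∀ k, (y (p k) || y (q k)) = true} ⊕ (Fin n → Bool) :=
    { toFun := fun x =>
        if hx : x.1 (Sum.inr ()) = true then
          Sum.inl ⟨fun i => x.1 (Sum.inl i), (key x.1).1 x.2 hx⟩
        else Sum.inr (fun i => x.1 (Sum.inl i))
      invFun := fun z =>
        match z with
        | Sum.inl y => ⟨fun v => match v with | Sum.inl i => y.1 i | Sum.inr _ => true,
            (key _).2 (fun _ k => y.2 k)⟩
        | Sum.inr y => ⟨fun v => match v with | Sum.inl i => y i | Sum.inr _ => false,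
            (key _).2 (fun h _ => by simp at h)⟩
      left_inv := by
        rintro ⟨x, hx⟩
        by_cases h : x (Sum.inr ()) = true
        · simp only [h, dif_pos]
          ext v
          cases v with
          | inl i => rfl
          | inr u => cases u; exact h.symm
        · simp only [h, dif_neg]
          ext v
          cases v with
          | inl i => rfl
          | inr u => cases u; simp at h; exact h.symm
      right_inv := by
        rintro (⟨y, hy⟩ | y)
        · simp
        · simp }
  rw [Fintype.card_congr e, Fintype.card_sum, Fintype.card_fun, Fintype.card_bool,
    Fintype.card_fin]
end

section
/- Let n, m ∈ ℕ and let (p_k, q_k) ∈ {1,…,n}² for k = 1,…,m. Consider the boolean dynamical system on the vertex set {0, 1,…,n, n+1} with f_i(x) = x(i) for 0 ≤ i ≤ n and f_{n+1}(x) = x(0) ∨ ((⋀_{k=1}^m (x(p_k) ∨ x(q_k))) ∧ x(n+1)). The number of fixed points of this system equals #sat + 2^{n+1}, where #sat is the number of assignments y : {1,…,n} → Bool with y(p_k) ∨ y(q_k) = true for all k. -/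
/-- The boolean dynamical system of the `S₀₀`-reduction on the vertex set
`{0} ⊕ {1,…,n} ⊕ {n+1}`: vertex `0` (`Sum.inl ()`) and the variable vertices
(`Sum.inr (Sum.inl i)`) carry the identity, and vertex `n+1` (`Sum.inr (Sum.inr ())`)
carries `f(x) = x 0 ∨ ((⋀_{k=1}^m (x p_k ∨ x q_k)) ∧ x (n+1))`. -/
noncomputable def sys16 (n m : ℕ) (p q : Fin m → Fin n) (v : Unit ⊕ Fin n ⊕ Unit)
    (x : Unit ⊕ Fin n ⊕ Unit → Bool) : Bool :=
  match v with
  | Sum.inl _ => x (Sum.inl ())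
  | Sum.inr (Sum.inl i) => x (Sum.inr (Sum.inl i))
  | Sum.inr (Sum.inr _) =>
      x (Sum.inl ()) ||
        ((Finset.univ.inf fun k : Fin m =>
            x (Sum.inr (Sum.inl (p k))) || x (Sum.inr (Sum.inl (q k)))) &&
          x (Sum.inr (Sum.inr ())))

def pack16 {n : ℕ} (a : Bool) (y : Fin n → Bool) (b : Bool) :
    Unit ⊕ Fin n ⊕ Unit → Bool :=
  Sum.elim (fun _ => a) (Sum.elim y (fun _ => b))

lemma fixed_iff16 (n m : ℕ) (p q : Fin m → Fin n) (x : Unit ⊕ Fin n ⊕ Unit → Bool) :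
    (∀ v, sys16 n m p q v x = x v) ↔
      (x (Sum.inl ()) ||
        ((Finset.univ.inf fun k : Fin m =>
            x (Sum.inr (Sum.inl (p k))) || x (Sum.inr (Sum.inl (q k)))) &&
          x (Sum.inr (Sum.inr ())))) = x (Sum.inr (Sum.inr ())) := by
  constructor
  · intro h; exact h (Sum.inr (Sum.inr ()))
  · intro h v
    rcases v with ⟨⟩ | i | ⟨⟩
    · rfl
    · rfl
    · exact h

lemma pack_fixed16 (n m : ℕ) (p q : Fin m → Fin n) (y : Fin n → Bool)
    (hy : ∀ k, (y (p k) || y (q k)) = true) :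
    ∀ v, sys16 n m p q v (pack16 false y true) = pack16 false y true v := by
  rw [fixed_iff16]
  have : (Finset.univ.inf fun k : Fin m => y (p k) || y (q k)) = true := by
    rw [show (true : Bool) = ⊤ from rfl, Finset.inf_eq_top_iff]
    intro k _
    exact hy k
  simp [pack16, this]

lemma pack_fixed16' (n m : ℕ) (p q : Fin m → Fin n) (y : Fin n → Bool) (a : Bool) :
    ∀ v, sys16 n m p q v (pack16 a y a) = pack16 a y a v := by
  rw [fixed_iff16]
  cases a <;> simp [pack16]

noncomputable def equiv16 (n m : ℕ) (p q : Fin m → Fin n) :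
    {x : Unit ⊕ Fin n ⊕ Unit → Bool // ∀ v, sys16 n m p q v x = x v} ≃
      ({y : Fin n → Bool // ∀ k, (y (p k) || y (q k)) = true} ⊕ ((Fin n → Bool) × Bool)) where
  toFun := fun ⟨x, hx⟩ =>
    if h : x (Sum.inl ()) = false ∧ x (Sum.inr (Sum.inr ())) = true then
      Sum.inl ⟨fun i => x (Sum.inr (Sum.inl i)), by
        intro k
        have hfix := (fixed_iff16 n m p q x).mp hx
        rw [h.1, h.2] at hfix
        simp only [Bool.false_or, Bool.and_true] at hfix
        rw [show (true : Bool) = ⊤ from rfl, Finset.inf_eq_top_iff] at hfix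
        exact hfix k (Finset.mem_univ k)⟩
    else
      Sum.inr (fun i => x (Sum.inr (Sum.inl i)), x (Sum.inl ()))
  invFun := fun s =>
    match s with
    | Sum.inl ⟨y, hy⟩ => ⟨pack16 false y true, pack_fixed16 n m p q y hy⟩
    | Sum.inr (y, a) => ⟨pack16 a y a, pack_fixed16' n m p q y a⟩
  left_inv := by
    rintro ⟨x, hx⟩
    by_cases h : x (Sum.inl ()) = false ∧ x (Sum.inr (Sum.inr ())) = true
    · simp only [dif_pos h]
      apply Subtype.ext
      funext v
      rcases v with ⟨⟩ | i | ⟨⟩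
      · simp [pack16, h.1]
      · rfl
      · simp [pack16, h.2]
    · simp only [dif_neg h]
      apply Subtype.ext
      funext v
      have hb : x (Sum.inr (Sum.inr ())) = x (Sum.inl ()) := by
        have hfix := (fixed_iff16 n m p q x).mp hx
        rcases ha : x (Sum.inl ()) with _ | _
        · rcases hbb : x (Sum.inr (Sum.inr ())) with _ | _
          · rfl
          · exact absurd ⟨ha, hbb⟩ h
        · rw [ha] at hfix
          simpa using hfix.symm
      rcases v with ⟨⟩ | i | ⟨⟩
      · rfl
      · rfl
      · simp [pack16, hb]
  right_inv := by
    rintro (⟨y, hy⟩ | ⟨y, a⟩)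
    · simp only [dif_pos (by exact ⟨rfl, rfl⟩ : pack16 false y true (Sum.inl ()) = false ∧
        pack16 false y true (Sum.inr (Sum.inr ())) = true)]
      rfl
    · have h : ¬ (pack16 a y a (Sum.inl ()) = false ∧
          pack16 a y a (Sum.inr (Sum.inr ())) = true) := by
        rintro ⟨h1, h2⟩
        simp only [pack16, Sum.elim_inl, Sum.elim_inr] at h1 h2
        rw [h1] at h2
        exact Bool.false_ne_true h2
      simp only [dif_neg h]
      rfl

/-- The number of fixed points of the system `sys16` equals `#sat + 2 ^ (n + 1)`, where
`#sat` is the number of satisfying assignments of the positive 2-CNF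
`⋀_k (x_{p_k} ∨ x_{q_k})`. -/
theorem stmt16 (n m : ℕ) (p q : Fin m → Fin n) :
    Fintype.card {x : Unit ⊕ Fin n ⊕ Unit → Bool // ∀ v, sys16 n m p q v x = x v} =
    Fintype.card {y : Fin n → Bool // ∀ k, (y (p k) || y (q k)) = true} + 2 ^ (n + 1) := by
  rw [Fintype.card_congr (equiv16 n m p q), Fintype.card_sum, Fintype.card_prod,
    Fintype.card_fun, Fintype.card_bool, Fintype.card_fin, pow_succ]
end

section
/- Let maj : Bool³ → Bool be maj(x, y, z) = (x ∧ y) ∨ (x ∧ z) ∨ (y ∧ z). Fix a, b ∈ Bool and let T be a binary tree whose leaves are labeled by pairs (p, q) of Booleans; define eval_{a,b} by eval_{a,b}(leaf(p, q)) = maj(p, q, b) and eval_{a,b}(node(L, R)) = maj(eval_{a,b}(L), eval_{a,b}(R), a). Then: eval_{false,false}(T) = ⋀_{(p,q) a leaf}(p ∧ q); eval_{false,true}(T) = ⋀_{(p,q) a leaf}(p ∨ q); eval_{true,false}(T) = ⋁_{(p,q) a leaf}(p ∧ q); and eval_{true,true}(T) = ⋁_{(p,q) a leaf}(p ∨ q).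 -/
/-- The majority function, the basis of the Post class `D₂`:
`maj x y z = (x ∧ y) ∨ (x ∧ z) ∨ (y ∧ z)`. -/
def maj (x y z : Bool) : Bool := (x && y) || (x && z) || (y && z)

/-- A binary tree whose leaves are labeled by pairs of Booleans. -/
inductive PairTree where
  | leaf : Bool → Bool → PairTree
  | node : PairTree → PairTree → PairTree

/-- Evaluation of the nested majority formula with parameters `a` and `b`:
a leaf `(p, q)` evaluates to `maj p q b`, and a node to `maj (eval L) (eval R) a`. -/
def PairTree.eval (a b : Bool) : PairTree → Bool
  | .leaf p q => maj p q b
  | .node L R => maj (L.eval a b) (R.eval a b) a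

/-- The list of leaf labels of a tree. -/
def PairTree.leaves : PairTree → List (Bool × Bool)
  | .leaf p q => [(p, q)]
  | .node L R => L.leaves ++ R.leaves

lemma maj_absorb (x y : Bool) : (x && y || x || y) = (x || y) := by cases x <;> cases y <;> rfl

/-- The four closed forms of the nested majority formula, according to the values of the
parameters `(a, b)`: `⋀ (p ∧ q)`, `⋀ (p ∨ q)`, `⋁ (p ∧ q)` and `⋁ (p ∨ q)` over the
leaves `(p, q)` of the tree. -/
theorem stmt17 (T : PairTree) :
    T.eval false false = (T.leaves.all fun pq => pq.1 && pq.2) ∧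
    T.eval false true = (T.leaves.all fun pq => pq.1 || pq.2) ∧
    T.eval true false = (T.leaves.any fun pq => pq.1 && pq.2) ∧
    T.eval true true = (T.leaves.any fun pq => pq.1 || pq.2) := by
  induction T with
  | leaf p q => cases p <;> cases q <;> simp [PairTree.eval, PairTree.leaves, maj]
  | node L R ihL ihR =>
    obtain ⟨l1, l2, l3, l4⟩ := ihL
    obtain ⟨r1, r2, r3, r4⟩ := ihR
    simp [PairTree.eval, PairTree.leaves, maj, l1, l2, l3, l4, r1, r2, r3, r4,
      List.all_append, List.any_append, maj_absorb]
end
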